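/- If R is a GNC ring, then every element of R is clean; that is, R is a clean ring. -/
import Mathlib

/-- An element is nil-clean if it is the sum of an idempotent and a nilpotent. -/
def IsNilClean {R : Type*} [Ring R] (a : R) : Prop :=
  ∃ e q : R, IsIdempotentElem e ∧ IsNilpotent q ∧ a = e + q

/-- A ring is GNC (generalized nil-clean) if every non-unit is nil-clean. -/
def IsGNC (R : Type*) [Ring R] : Prop :=
  ∀ a : R, ¬ IsUnit a → IsNilClean a

theorem gnc_is_clean {R : Type*} [Ring R] (h : IsGNC R) :
    ∀ a : R, ∃ e u : R, IsIdempotentElem e ∧ IsUnit u ∧ a = e + u := by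
  intro a
  by_cases hu : IsUnit (a - 1)
  · exact ⟨1, a - 1, IsIdempotentElem.one, hu, by abel⟩
  · obtain ⟨e, q, he, hq, heq⟩ := h (a - 1) hu
    refine ⟨e, 1 + q, he, hq.isUnit_one_add, ?_⟩
    have := eq_add_of_sub_eq heq
    rw [this]; abel
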